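/- Risk of a composed (autoregressive) predictor is bounded by the sum of position-wise risks: Let P be a probability distribution on V^T (sequences of length T over finite alphabet V, with T ≥ 2), strictly positive. For i = 2,…,T let μ_i assign to each prefix v_{1:i−1} a strictly positive probability distribution over V, and define the composed predictor μ(v_T | v_1) := Σ_{v_{2:T−1}} Π_{i=2}^{T} μ_i(v_i | v_{1:i−1}). Then E_P[−log μ(V_T | V_1)] ≤ Σ_{i=2}^{T} E_P[−log μ_i(V_i | V_{1:i−1})]. -/

import Mathlib

theorem stmt6 {V : Type*} [Fintype V] [Nonempty V] [DecidableEq V]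
    (T : ℕ) (hT : 2 ≤ T)
    (P : (Fin T → V) → ℝ) (hPpos : ∀ v, 0 < P v) (hP1 : ∑ v, P v = 1)
    (μ : Fin T → (Fin T → V) → V → ℝ)
    (hpre : ∀ (i : Fin T) (v w : Fin T → V),
      (∀ j : Fin T, (j : ℕ) < (i : ℕ) → v j = w j) → μ i v = μ i w)
    (hpos : ∀ i v y, 0 < μ i v y)
    (hsum : ∀ i v, ∑ y, μ i v y = 1) :
    let first : Fin T := ⟨0, by omega⟩
    let last : Fin T := ⟨T - 1, by omega⟩
    let μc : V → V → ℝ := fun v0 vT =>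
      ∑ w ∈ Finset.univ.filter (fun w : Fin T → V => w first = v0 ∧ w last = vT),
        ∏ i ∈ Finset.univ \ {first}, μ i w (w i)
    (∑ v, P v * (-Real.log (μc (v first) (v last)))) ≤
      ∑ i ∈ Finset.univ \ {first}, ∑ v, P v * (-Real.log (μ i v (v i))) := by
  intro first last μc
  have key : ∀ v : Fin T → V, -Real.log (μc (v first) (v last)) ≤
      ∑ i ∈ Finset.univ \ {first}, -Real.log (μ i v (v i)) := by
    intro v
    have hprodpos : 0 < ∏ i ∈ Finset.univ \ {first}, μ i v (v i) :=
      Finset.prod_pos fun i _ => hpos i v (v i)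
    have hle : ∏ i ∈ Finset.univ \ {first}, μ i v (v i) ≤ μc (v first) (v last) := by
      apply Finset.single_le_sum (f := fun w : Fin T → V =>
        ∏ i ∈ Finset.univ \ {first}, μ i w (w i))
      · intro w _
        exact le_of_lt (Finset.prod_pos fun i _ => hpos i w (w i))
      · simp
    have hlog : Real.log (∏ i ∈ Finset.univ \ {first}, μ i v (v i)) ≤
        Real.log (μc (v first) (v last)) := Real.log_le_log hprodpos hle
    have heq : Real.log (∏ i ∈ Finset.univ \ {first}, μ i v (v i)) =
        ∑ i ∈ Finset.univ \ {first}, Real.log (μ i v (v i)) :=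
      Real.log_prod (fun i _ => (hpos i v (v i)).ne')
    rw [heq] at hlog
    have := neg_le_neg hlog
    simpa [Finset.sum_neg_distrib] using this
  calc ∑ v, P v * (-Real.log (μc (v first) (v last)))
      ≤ ∑ v, P v * (∑ i ∈ Finset.univ \ {first}, -Real.log (μ i v (v i))) := by
        apply Finset.sum_le_sum
        intro v _
        exact mul_le_mul_of_nonneg_left (key v) (hPpos v).le
    _ = ∑ i ∈ Finset.univ \ {first}, ∑ v, P v * (-Real.log (μ i v (v i))) := by
        simp_rw [Finset.mul_sum]
        exact Finset.sum_comm
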